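/- Let M be a real symmetric positive semidefinite n×n matrix with strictly positive diagonal pivot p = M[k,k], and let R = M - (1/p)M[:,k]M[:,k]ᵀ. Then for every index set S ⊆ {1,…,n}, the principal minor det(R[S,S]) is nonnegative; moreover if k ∈ S then det(R[S,S]) = 0. -/

import Mathlib

open Matrix

lemma deflation_posSemidef {n : ℕ} (M : Matrix (Fin n) (Fin n) ℝ)
    (hM : M.PosSemidef) (k : Fin n) (hp : 0 < M k k) :
    (M - (M k k)⁻¹ • vecMulVec (fun i => M i k) (fun i => M i k)).PosSemidef := by
  open scoped MatrixOrder in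
  obtain ⟨B, hB⟩ : ∃ B : Matrix (Fin n) (Fin n) ℝ, M = Bᴴ * B :=
    CStarAlgebra.nonneg_iff_eq_star_mul_self.mp hM.nonneg
  have key : ∀ y z : Fin n → ℝ, y ⬝ᵥ (M *ᵥ z) = (B *ᵥ y) ⬝ᵥ (B *ᵥ z) := by
    intro y z
    rw [hB, ← mulVec_mulVec, dotProduct_mulVec, vecMul_conjTranspose]
    simp
  refine posSemidef_iff_dotProduct_mulVec.mpr ⟨?_, ?_⟩
  · ext i j
    have := congrFun (congrFun hM.1 i) j
    simp only [conjTranspose_apply, RCLike.star_def, starRingEnd_apply, star_trivial] at this ⊢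
    simp only [Matrix.sub_apply, Matrix.smul_apply, vecMulVec_apply, smul_eq_mul, this]
    ring
  · intro x
    set u := B *ᵥ x with hu
    set c := B *ᵥ Pi.single k 1 with hc
    have hv : (fun i => M i k) = M *ᵥ Pi.single k 1 := by
      funext i; rw [mulVec_single_one]; rfl
    have hpc : M k k = c ⬝ᵥ c := by
      have := key (Pi.single k 1) (Pi.single k 1)
      rw [← this, single_dotProduct, ← hv, one_mul]
    have hvx : (fun i => M i k) ⬝ᵥ x = c ⬝ᵥ u := by
      rw [hv, dotProduct_comm, key, dotProduct_comm]
    have hRx : x ⬝ᵥ ((M - (M k k)⁻¹ • vecMulVec (fun i => M i k) (fun i => M i k)) *ᵥ x)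
        = u ⬝ᵥ u - (M k k)⁻¹ * (c ⬝ᵥ u) ^ 2 := by
      rw [sub_mulVec, dotProduct_sub, key]
      congr 1
      rw [smul_mulVec, dotProduct_smul]
      have : vecMulVec (fun i => M i k) (fun i => M i k) *ᵥ x
          = ((fun i => M i k) ⬝ᵥ x) • (fun i => M i k) := by
        funext i
        simp only [vecMulVec_apply, mulVec, dotProduct, Pi.smul_apply, smul_eq_mul,
          Finset.sum_mul, Finset.mul_sum]
        exact Finset.sum_congr rfl fun j _ => by ring
      rw [this, dotProduct_smul, hvx, smul_eq_mul, smul_eq_mul, dotProduct_comm x, hvx, sq]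
    have cs : (c ⬝ᵥ u) ^ 2 ≤ (c ⬝ᵥ c) * (u ⬝ᵥ u) := by
      have := Finset.sum_mul_sq_le_sq_mul_sq Finset.univ c u
      simpa [dotProduct, sq] using this
    have hstar : (star x : Fin n → ℝ) = x := by simp
    show (0:ℝ) ≤ star x ⬝ᵥ _
    rw [hstar, hRx, sub_nonneg, inv_mul_le_iff₀ hp]
    calc (c ⬝ᵥ u) ^ 2 ≤ (c ⬝ᵥ c) * (u ⬝ᵥ u) := cs
      _ = M k k * (u ⬝ᵥ u) := by rw [hpc]

theorem deflation_principal_minors {n : ℕ} (M : Matrix (Fin n) (Fin n) ℝ)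
    (hM : M.PosSemidef) (k : Fin n) (hp : 0 < M k k) :
    ∀ S : Finset (Fin n),
      0 ≤ ((M - (M k k)⁻¹ • vecMulVec (fun i => M i k) (fun i => M i k)).submatrix
            (fun i : S => (i : Fin n)) (fun j : S => (j : Fin n))).det ∧
      (k ∈ S →
        ((M - (M k k)⁻¹ • vecMulVec (fun i => M i k) (fun i => M i k)).submatrix
            (fun i : S => (i : Fin n)) (fun j : S => (j : Fin n))).det = 0) := by
  intro S
  have hR := deflation_posSemidef M hM k hp
  have hsub := hR.submatrix (fun i : S => (i : Fin n))
  constructor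
  · rw [hsub.1.det_eq_prod_eigenvalues]
    exact Finset.prod_nonneg fun i _ => hsub.eigenvalues_nonneg i
  · intro hk
    apply Matrix.det_eq_zero_of_row_eq_zero (⟨k, hk⟩ : S)
    intro j
    have hsym : M k (j : Fin n) = M (j : Fin n) k := by
      have := congrFun (congrFun hM.1 k) (j : Fin n)
      simpa [conjTranspose_apply] using this.symm
    simp only [submatrix_apply, Matrix.sub_apply, Matrix.smul_apply, vecMulVec_apply, smul_eq_mul]
    rw [hsym, inv_mul_cancel_left₀ hp.ne']
    ring
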